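/- Let π be an n-profile with g₂ > g₁ (positive gap), where g₁, g₂ are the facility locations of mechanism M₂. For each i define f₂(i) = max(0, min(g₂, πᵢ) − g₁)/(g₂ − g₁) and f₁(i) = 1 − f₂(i), and W_ℓ = Σᵢ f_ℓ(i). Let S_ℓ be the set of agents served by facility ℓ in the lexicographically first optimal 1-D solution. Then W_ℓ ≥ |S_ℓ|/2 for ℓ ∈ {1,2}. -/
import Mathlib

open scoped Classical

noncomputable def cost1 {n : ℕ} (π : Fin n → ℝ) (a b : ℝ) : ℝ :=
  ∑ i, min |π i - a| |π i - b|

def lexLE (p q : ℝ × ℝ) : Prop := p.1 < q.1 ∨ (p.1 = q.1 ∧ p.2 ≤ q.2)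

def LexOpt {n : ℕ} (π : Fin n → ℝ) (σ : ℝ × ℝ) : Prop :=
  σ.1 ≤ σ.2 ∧ (∀ a b : ℝ, a ≤ b → cost1 π σ.1 σ.2 ≤ cost1 π a b) ∧
  (∀ a b : ℝ, a ≤ b → cost1 π a b = cost1 π σ.1 σ.2 → lexLE σ (a, b))

/-- fractional weight of agent i toward the right facility -/
noncomputable def frac2 {n : ℕ} (π : Fin n → ℝ) (g1 g2 : ℝ) (i : Fin n) : ℝ :=
  max 0 (min g2 (π i) - g1) / (g2 - g1)

lemma pt_left {a b x : ℝ} (hab : a ≤ b) : max 0 (a - x) ≤ min |x - a| |x - b| := by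
  apply le_min <;> apply max_le (abs_nonneg _)
  · rw [abs_sub_comm]; exact le_abs_self _
  · calc a - x ≤ b - x := by linarith
      _ ≤ |x - b| := by rw [abs_sub_comm]; exact le_abs_self _
lemma pt_right {a b x : ℝ} (hab : a ≤ b) : max 0 (x - b) ≤ min |x - a| |x - b| := by
  apply le_min <;> apply max_le (abs_nonneg _)
  · calc x - b ≤ x - a := by linarith
      _ ≤ |x - a| := le_abs_self _
  · exact le_abs_self _
lemma max_sub_max (c x : ℝ) : max 0 (c - x) - max 0 (x - c) = c - x := by
  rcases le_total x c with h | h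
  · rw [max_eq_right (by linarith), max_eq_left (by linarith)]; ring
  · rw [max_eq_left (by linarith), max_eq_right (by linarith)]; ring
lemma sum_max_sub {n : ℕ} (π : Fin n → ℝ) (c : ℝ) :
    (∑ i, max 0 (c - π i)) - (∑ i, max 0 (π i - c)) = n * c - ∑ i, π i := by
  rw [← Finset.sum_sub_distrib]
  have : ∀ i ∈ Finset.univ, max 0 (c - π i) - max 0 (π i - c) = c - π i :=
    fun i _ => max_sub_max c (π i)
  rw [Finset.sum_congr rfl this, Finset.sum_sub_distrib, Finset.sum_const, Finset.card_univ]
  simp [nsmul_eq_mul]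
lemma median_left {n : ℕ} (π : Fin n → ℝ) (s1 s2 : ℝ) (h12 : s1 ≤ s2)
    (hopt : ∀ a b : ℝ, a ≤ b → cost1 π s1 s2 ≤ cost1 π a b) :
    (Finset.univ.filter (fun i : Fin n => |π i - s1| ≤ |π i - s2|)).card ≤
      2 * (Finset.univ.filter (fun i : Fin n => π i ≤ s1)).card := by
  classical
  set P : Fin n → Prop := fun i => |π i - s1| ≤ |π i - s2| with hP
  set S1 := Finset.univ.filter P with hS1
  set A := S1.filter (fun i => π i ≤ s1) with hA
  set B := S1.filter (fun i => ¬ π i ≤ s1) with hB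
  have hAB : A.card + B.card = S1.card := Finset.card_filter_add_card_filter_not _
  by_contra hcon
  push_neg at hcon
  have hAle : A.card ≤ (Finset.univ.filter (fun i : Fin n => π i ≤ s1)).card := by
    apply Finset.card_le_card
    intro i hi
    simp only [hA, Finset.mem_filter] at hi ⊢
    exact ⟨Finset.mem_univ i, hi.2⟩
  have hABlt : A.card < B.card := by omega
  have hBne : B.Nonempty := Finset.card_pos.mp (by omega)
  obtain ⟨i₀, hi₀, hmin⟩ := B.exists_min_image (fun i => π i) hBne
  have hi₀' : ¬ π i₀ ≤ s1 := (Finset.mem_filter.mp hi₀).2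
  set ε := π i₀ - s1 with hε
  have hεpos : 0 < ε := by simp only [hε]; linarith [lt_of_not_ge hi₀']
  set a := s1 + ε with ha
  -- distances within S1
  have hAdist : ∀ i ∈ A, |π i - a| = |π i - s1| + ε := by
    intro i hi
    have h1 : π i ≤ s1 := (Finset.mem_filter.mp hi).2
    rw [abs_of_nonpos (by simp only [ha]; linarith), abs_of_nonpos (by linarith)]
    simp only [ha]; ring
  have hBdist : ∀ i ∈ B, |π i - a| = |π i - s1| - ε := by
    intro i hi
    have h1 : ¬ π i ≤ s1 := (Finset.mem_filter.mp hi).2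
    have h2 : π i₀ ≤ π i := hmin i hi
    rw [abs_of_nonneg (by simp only [ha, hε]; linarith), abs_of_nonneg (by linarith [lt_of_not_ge h1])]
    simp only [ha]; ring
  have hkey : ∑ i ∈ S1, |π i - a| < ∑ i ∈ S1, |π i - s1| := by
    have e1 : ∑ i ∈ A, (|π i - s1| + ε) = ∑ i ∈ A, |π i - s1| + A.card * ε := by
      rw [Finset.sum_add_distrib, Finset.sum_const, nsmul_eq_mul]
    have e2 : ∑ i ∈ B, (|π i - s1| - ε) = ∑ i ∈ B, |π i - s1| - B.card * ε := by
      rw [Finset.sum_sub_distrib, Finset.sum_const, nsmul_eq_mul]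
    have hsa : ∑ i ∈ S1, |π i - a| =
        (∑ i ∈ A, |π i - s1| + A.card * ε) + (∑ i ∈ B, |π i - s1| - B.card * ε) := by
      rw [← Finset.sum_filter_add_sum_filter_not S1 (fun i => π i ≤ s1), ← hA, ← hB,
        Finset.sum_congr rfl hAdist, Finset.sum_congr rfl hBdist, e1, e2]
    have hss : ∑ i ∈ S1, |π i - s1| = ∑ i ∈ A, |π i - s1| + ∑ i ∈ B, |π i - s1| := by
      rw [← Finset.sum_filter_add_sum_filter_not S1 (fun i => π i ≤ s1), ← hA, ← hB]
    have hc : (A.card : ℝ) < B.card := by exact_mod_cast hABlt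
    rw [hsa, hss]
    nlinarith
  -- cost decomposition at σ
  have hcost : cost1 π s1 s2 = ∑ i ∈ S1, |π i - s1| + ∑ i ∈ Finset.univ.filter (fun i => ¬ P i), |π i - s2| := by
    unfold cost1
    rw [← Finset.sum_filter_add_sum_filter_not Finset.univ P]
    congr 1
    · exact Finset.sum_congr rfl (fun i hi => min_eq_left (Finset.mem_filter.mp hi).2)
    · exact Finset.sum_congr rfl (fun i hi =>
        min_eq_right (le_of_lt (lt_of_not_ge (Finset.mem_filter.mp hi).2)))
  -- the perturbed pair
  have hub : cost1 π (min a s2) (max a s2) ≤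
      ∑ i ∈ S1, |π i - a| + ∑ i ∈ Finset.univ.filter (fun i => ¬ P i), |π i - s2| := by
    unfold cost1
    rw [← Finset.sum_filter_add_sum_filter_not Finset.univ P]
    apply add_le_add
    · apply Finset.sum_le_sum
      intro i _
      rcases le_total a s2 with h | h
      · rw [min_eq_left h]; exact min_le_left _ _
      · rw [max_eq_left h]; exact min_le_right _ _
    · apply Finset.sum_le_sum
      intro i _
      rcases le_total a s2 with h | h
      · rw [max_eq_right h]; exact min_le_right _ _
      · rw [min_eq_right h]; exact min_le_left _ _
  have := hopt (min a s2) (max a s2) (min_le_max)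
  linarith
lemma median_right {n : ℕ} (π : Fin n → ℝ) (s1 s2 : ℝ) (h12 : s1 ≤ s2)
    (hopt : ∀ a b : ℝ, a ≤ b → cost1 π s1 s2 ≤ cost1 π a b) :
    (Finset.univ.filter (fun i : Fin n => ¬ |π i - s1| ≤ |π i - s2|)).card ≤
      2 * (Finset.univ.filter (fun i : Fin n => s2 ≤ π i)).card := by
  classical
  set P : Fin n → Prop := fun i => |π i - s1| ≤ |π i - s2| with hP
  set S2 := Finset.univ.filter (fun i => ¬ P i) with hS2
  set A := S2.filter (fun i => s2 ≤ π i) with hA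
  set B := S2.filter (fun i => ¬ s2 ≤ π i) with hB
  have hAB : A.card + B.card = S2.card := Finset.card_filter_add_card_filter_not _
  by_contra hcon
  push_neg at hcon
  have hAle : A.card ≤ (Finset.univ.filter (fun i : Fin n => s2 ≤ π i)).card := by
    apply Finset.card_le_card
    intro i hi
    simp only [hA, Finset.mem_filter] at hi ⊢
    exact ⟨Finset.mem_univ i, hi.2⟩
  have hABlt : A.card < B.card := by omega
  have hBne : B.Nonempty := Finset.card_pos.mp (by omega)
  obtain ⟨i₀, hi₀, hmax⟩ := B.exists_max_image (fun i => π i) hBne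
  have hi₀' : ¬ s2 ≤ π i₀ := (Finset.mem_filter.mp hi₀).2
  set ε := s2 - π i₀ with hε
  have hεpos : 0 < ε := by simp only [hε]; linarith [lt_of_not_ge hi₀']
  set b := s2 - ε with hb
  have hAdist : ∀ i ∈ A, |π i - b| = |π i - s2| + ε := by
    intro i hi
    have h1 : s2 ≤ π i := (Finset.mem_filter.mp hi).2
    rw [abs_of_nonneg (by simp only [hb]; linarith), abs_of_nonneg (by linarith)]
    simp only [hb]; ring
  have hBdist : ∀ i ∈ B, |π i - b| = |π i - s2| - ε := by
    intro i hi
    have h1 : ¬ s2 ≤ π i := (Finset.mem_filter.mp hi).2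
    have h2 : π i ≤ π i₀ := hmax i hi
    rw [abs_of_nonpos (by simp only [hb, hε]; linarith), abs_of_nonpos (by linarith [lt_of_not_ge h1])]
    simp only [hb]; ring
  have hkey : ∑ i ∈ S2, |π i - b| < ∑ i ∈ S2, |π i - s2| := by
    have e1 : ∑ i ∈ A, (|π i - s2| + ε) = ∑ i ∈ A, |π i - s2| + A.card * ε := by
      rw [Finset.sum_add_distrib, Finset.sum_const, nsmul_eq_mul]
    have e2 : ∑ i ∈ B, (|π i - s2| - ε) = ∑ i ∈ B, |π i - s2| - B.card * ε := by
      rw [Finset.sum_sub_distrib, Finset.sum_const, nsmul_eq_mul]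
    have hsa : ∑ i ∈ S2, |π i - b| =
        (∑ i ∈ A, |π i - s2| + A.card * ε) + (∑ i ∈ B, |π i - s2| - B.card * ε) := by
      rw [← Finset.sum_filter_add_sum_filter_not S2 (fun i => s2 ≤ π i), ← hA, ← hB,
        Finset.sum_congr rfl hAdist, Finset.sum_congr rfl hBdist, e1, e2]
    have hss : ∑ i ∈ S2, |π i - s2| = ∑ i ∈ A, |π i - s2| + ∑ i ∈ B, |π i - s2| := by
      rw [← Finset.sum_filter_add_sum_filter_not S2 (fun i => s2 ≤ π i), ← hA, ← hB]
    have hc : (A.card : ℝ) < B.card := by exact_mod_cast hABlt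
    rw [hsa, hss]
    nlinarith
  have hcost : cost1 π s1 s2 = ∑ i ∈ Finset.univ.filter P, |π i - s1| + ∑ i ∈ S2, |π i - s2| := by
    unfold cost1
    rw [← Finset.sum_filter_add_sum_filter_not Finset.univ P]
    congr 1
    · exact Finset.sum_congr rfl (fun i hi => min_eq_left (Finset.mem_filter.mp hi).2)
    · exact Finset.sum_congr rfl (fun i hi =>
        min_eq_right (le_of_lt (lt_of_not_ge (Finset.mem_filter.mp hi).2)))
  have hub : cost1 π (min s1 b) (max s1 b) ≤
      ∑ i ∈ Finset.univ.filter P, |π i - s1| + ∑ i ∈ S2, |π i - b| := by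
    unfold cost1
    rw [← Finset.sum_filter_add_sum_filter_not Finset.univ P]
    apply add_le_add
    · apply Finset.sum_le_sum
      intro i _
      rcases le_total s1 b with h | h
      · rw [min_eq_left h]; exact min_le_left _ _
      · rw [max_eq_left h]; exact min_le_right _ _
    · apply Finset.sum_le_sum
      intro i _
      rcases le_total s1 b with h | h
      · rw [max_eq_right h]; exact min_le_right _ _
      · rw [min_eq_right h]; exact min_le_left _ _
  have := hopt (min s1 b) (max s1 b) (min_le_max)
  linarith

theorem stmt9 {n : ℕ} (hn : 2 ≤ n) (π : Fin n → ℝ) (hπ : Monotone π) (C : ℝ)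
    (hC : IsLeast {c : ℝ | ∃ a b : ℝ, a ≤ b ∧ cost1 π a b = c} C)
    (h1 h2 : ℝ)
    (hh1 : π ⟨0, by omega⟩ ≤ h1 ∧ (∑ i, max 0 (h1 - π i)) = C)
    (hh2 : h2 ≤ π ⟨n - 1, by omega⟩ ∧ (∑ i, max 0 (π i - h2)) = C)
    (g1 g2 : ℝ) (hg1 : g1 = min h1 ((∑ i, π i) / n)) (hg2 : g2 = max h2 ((∑ i, π i) / n))
    (hgap : g1 < g2)
    (σ : ℝ × ℝ) (hσ : LexOpt π σ) :
    (∑ i, (1 - frac2 π g1 g2 i)) ≥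
      ((Finset.univ.filter (fun i : Fin n => |π i - σ.1| ≤ |π i - σ.2|)).card : ℝ) / 2 ∧
    (∑ i, frac2 π g1 g2 i) ≥
      ((n - (Finset.univ.filter (fun i : Fin n => |π i - σ.1| ≤ |π i - σ.2|)).card : ℕ) : ℝ) / 2 := by
  classical
  have hσ12 : σ.1 ≤ σ.2 := hσ.1
  have hopt : ∀ a b : ℝ, a ≤ b → cost1 π σ.1 σ.2 ≤ cost1 π a b := hσ.2.1
  have hCσ : cost1 π σ.1 σ.2 = C := by
    obtain ⟨a, b, hab, habC⟩ := hC.1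
    have h1' := hopt a b hab
    have h2' : C ≤ cost1 π σ.1 σ.2 := hC.2 ⟨σ.1, σ.2, hσ12, rfl⟩
    linarith
  set μ := (∑ i, π i) / n with hμ
  have hnpos : (0:ℝ) < n := by
    have : (0:ℕ) < n := by omega
    exact_mod_cast this
  have hμn : (n:ℝ) * μ = ∑ i, π i := by
    rw [hμ]; field_simp
  have hL1 : (∑ i, max 0 (σ.1 - π i)) ≤ C := by
    rw [← hCσ]; exact Finset.sum_le_sum (fun i _ => pt_left hσ12)
  have hR2 : (∑ i, max 0 (π i - σ.2)) ≤ C := by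
    rw [← hCσ]; exact Finset.sum_le_sum (fun i _ => pt_right hσ12)
  -- σ.1 ≤ h1
  have hσh1 : σ.1 ≤ h1 := by
    by_contra hlt
    push_neg at hlt
    set T := Finset.univ.filter (fun i => π i ≤ h1) with hT
    have hTmem : (⟨0, by omega⟩ : Fin n) ∈ T :=
      Finset.mem_filter.mpr ⟨Finset.mem_univ _, hh1.1⟩
    have hTcard : 1 ≤ T.card := Finset.card_pos.mpr ⟨_, hTmem⟩
    have hCsum : C = ∑ i ∈ T, (h1 - π i) := by
      rw [← hh1.2, ← Finset.sum_filter_add_sum_filter_not Finset.univ (fun i => π i ≤ h1), ← hT]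
      have z1 : ∀ i ∈ T, max 0 (h1 - π i) = h1 - π i := fun i hi =>
        max_eq_right (by linarith [(Finset.mem_filter.mp hi).2])
      have z2 : ∀ i ∈ Finset.univ.filter (fun i => ¬ π i ≤ h1), max 0 (h1 - π i) = 0 :=
        fun i hi => max_eq_left (by linarith [lt_of_not_ge (Finset.mem_filter.mp hi).2])
      rw [Finset.sum_congr rfl z1, Finset.sum_congr rfl z2, Finset.sum_const_zero, add_zero]
    have hub2 : ∑ i ∈ T, (σ.1 - π i) ≤ C := by
      rw [← hCσ]
      calc ∑ i ∈ T, (σ.1 - π i) ≤ ∑ i ∈ T, min |π i - σ.1| |π i - σ.2| := by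
            apply Finset.sum_le_sum
            intro i _
            calc σ.1 - π i ≤ max 0 (σ.1 - π i) := le_max_right _ _
              _ ≤ _ := pt_left hσ12
        _ ≤ cost1 π σ.1 σ.2 := by
            apply Finset.sum_le_sum_of_subset_of_nonneg (Finset.filter_subset _ _)
            intro i _ _
            exact le_min (abs_nonneg _) (abs_nonneg _)
    have hsplit : ∑ i ∈ T, (σ.1 - π i) = ∑ i ∈ T, (h1 - π i) + T.card * (σ.1 - h1) := by
      have : ∀ i ∈ T, σ.1 - π i = (h1 - π i) + (σ.1 - h1) := fun i _ => by ring
      rw [Finset.sum_congr rfl this, Finset.sum_add_distrib, Finset.sum_const, nsmul_eq_mul]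
    have hc1 : (1:ℝ) ≤ T.card := by exact_mod_cast hTcard
    nlinarith
  -- h2 ≤ σ.2
  have hh2σ : h2 ≤ σ.2 := by
    by_contra hlt
    push_neg at hlt
    set T := Finset.univ.filter (fun i => h2 ≤ π i) with hT
    have hTmem : (⟨n - 1, by omega⟩ : Fin n) ∈ T :=
      Finset.mem_filter.mpr ⟨Finset.mem_univ _, hh2.1⟩
    have hTcard : 1 ≤ T.card := Finset.card_pos.mpr ⟨_, hTmem⟩
    have hCsum : C = ∑ i ∈ T, (π i - h2) := by
      rw [← hh2.2, ← Finset.sum_filter_add_sum_filter_not Finset.univ (fun i => h2 ≤ π i), ← hT]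
      have z1 : ∀ i ∈ T, max 0 (π i - h2) = π i - h2 := fun i hi =>
        max_eq_right (by linarith [(Finset.mem_filter.mp hi).2])
      have z2 : ∀ i ∈ Finset.univ.filter (fun i => ¬ h2 ≤ π i), max 0 (π i - h2) = 0 :=
        fun i hi => max_eq_left (by linarith [lt_of_not_ge (Finset.mem_filter.mp hi).2])
      rw [Finset.sum_congr rfl z1, Finset.sum_congr rfl z2, Finset.sum_const_zero, add_zero]
    have hub2 : ∑ i ∈ T, (π i - σ.2) ≤ C := by
      rw [← hCσ]
      calc ∑ i ∈ T, (π i - σ.2) ≤ ∑ i ∈ T, min |π i - σ.1| |π i - σ.2| := by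
            apply Finset.sum_le_sum
            intro i _
            calc π i - σ.2 ≤ max 0 (π i - σ.2) := le_max_right _ _
              _ ≤ _ := pt_right hσ12
        _ ≤ cost1 π σ.1 σ.2 := by
            apply Finset.sum_le_sum_of_subset_of_nonneg (Finset.filter_subset _ _)
            intro i _ _
            exact le_min (abs_nonneg _) (abs_nonneg _)
    have hsplit : ∑ i ∈ T, (π i - σ.2) = ∑ i ∈ T, (π i - h2) + T.card * (h2 - σ.2) := by
      have : ∀ i ∈ T, π i - σ.2 = (π i - h2) + (h2 - σ.2) := fun i _ => by ring
      rw [Finset.sum_congr rfl this, Finset.sum_add_distrib, Finset.sum_const, nsmul_eq_mul]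
    have hc1 : (1:ℝ) ≤ T.card := by exact_mod_cast hTcard
    nlinarith
  have hid : ∀ c : ℝ, (∑ i, max 0 (c - π i)) - (∑ i, max 0 (π i - c)) = n * c - n * μ := by
    intro c
    rw [sum_max_sub, hμn]
  -- σ.1 ≤ μ
  have hσμ : σ.1 ≤ μ := by
    by_contra hlt
    push_neg at hlt
    have hh2μ : μ < h2 := by
      have hg1μ : g1 = μ := by rw [hg1]; exact min_eq_right (by linarith)
      have h' : μ < max h2 μ := by rw [← hg2, ← hg1μ]; exact hgap
      rcases lt_max_iff.mp h' with h'' | h''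
      · exact h''
      · exact absurd h'' (lt_irrefl μ)
    have hnμσ : (n:ℝ) * μ < n * σ.1 := by
      exact (mul_lt_mul_iff_right₀ hnpos).mpr hlt
    rcases le_or_gt σ.1 h2 with hcase | hcase
    · have k1 : C ≤ ∑ i, max 0 (π i - σ.1) := by
        rw [← hh2.2]
        exact Finset.sum_le_sum fun i _ => max_le_max le_rfl (by linarith)
      have k2 := hid σ.1
      linarith
    · have k1 : (∑ i, max 0 (h2 - π i)) ≤ ∑ i, max 0 (σ.1 - π i) :=
        Finset.sum_le_sum fun i _ => max_le_max le_rfl (by linarith)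
      have k2 := hid h2
      rw [hh2.2] at k2
      have hnμh : (n:ℝ) * μ < n * h2 := (mul_lt_mul_iff_right₀ hnpos).mpr hh2μ
      linarith
  -- μ ≤ σ.2
  have hμσ2 : μ ≤ σ.2 := by
    by_contra hlt
    push_neg at hlt
    have hh1μ : h1 < μ := by
      have hg2μ : g2 = μ := by rw [hg2]; exact max_eq_right (by linarith)
      have h' : min h1 μ < μ := by rw [← hg1, ← hg2μ]; exact hgap
      rcases min_lt_iff.mp h' with h'' | h''
      · exact h''
      · exact absurd h'' (lt_irrefl μ)
    have hnσμ : (n:ℝ) * σ.2 < n * μ := by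
      exact (mul_lt_mul_iff_right₀ hnpos).mpr hlt
    rcases le_or_gt h1 σ.2 with hcase | hcase
    · have k1 : C ≤ ∑ i, max 0 (σ.2 - π i) := by
        rw [← hh1.2]
        exact Finset.sum_le_sum fun i _ => max_le_max le_rfl (by linarith)
      have k2 := hid σ.2
      linarith
    · have k1 : (∑ i, max 0 (π i - h1)) ≤ ∑ i, max 0 (π i - σ.2) :=
        Finset.sum_le_sum fun i _ => max_le_max le_rfl (by linarith)
      have k2 := hid h1
      rw [hh1.2] at k2
      have hnhμ : (n:ℝ) * h1 < n * μ := (mul_lt_mul_iff_right₀ hnpos).mpr hh1μ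
      linarith
  have hσg1 : σ.1 ≤ g1 := by rw [hg1]; exact le_min hσh1 hσμ
  have hg2σ : g2 ≤ σ.2 := by rw [hg2]; exact max_le hh2σ hμσ2
  -- frac2 facts
  have hgap' : (0:ℝ) < g2 - g1 := sub_pos.mpr hgap
  have hfnn : ∀ i, 0 ≤ frac2 π g1 g2 i := fun i => div_nonneg (le_max_left _ _) hgap'.le
  have hfle : ∀ i, frac2 π g1 g2 i ≤ 1 := by
    intro i
    unfold frac2
    rw [div_le_one hgap']
    exact max_le (by linarith) (by linarith [min_le_left g2 (π i)])
  have hf0 : ∀ i, π i ≤ g1 → frac2 π g1 g2 i = 0 := by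
    intro i h
    unfold frac2
    rw [max_eq_left (by linarith [min_le_right g2 (π i)]), zero_div]
  have hf1 : ∀ i, g2 ≤ π i → frac2 π g1 g2 i = 1 := by
    intro i h
    unfold frac2
    rw [min_eq_left h, max_eq_right (by linarith), div_self hgap'.ne']
  constructor
  · -- left facility
    set Q1 := Finset.univ.filter (fun i : Fin n => π i ≤ σ.1) with hQ1
    have step1 : (Q1.card : ℝ) ≤ ∑ i, (1 - frac2 π g1 g2 i) := by
      have e1 : ∀ i ∈ Q1, (1:ℝ) - frac2 π g1 g2 i = 1 := by
        intro i hi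
        rw [hf0 i (le_trans (Finset.mem_filter.mp hi).2 hσg1)]
        ring
      calc (Q1.card : ℝ) = ∑ i ∈ Q1, (1 - frac2 π g1 g2 i) := by
            rw [Finset.sum_congr rfl e1, Finset.sum_const, nsmul_eq_mul, mul_one]
        _ ≤ ∑ i, (1 - frac2 π g1 g2 i) := by
            apply Finset.sum_le_sum_of_subset_of_nonneg (Finset.filter_subset _ _)
            intro i _ _
            linarith [hfle i]
    have hmed := median_left π σ.1 σ.2 hσ12 hopt
    have hmed' : ((Finset.univ.filter (fun i : Fin n => |π i - σ.1| ≤ |π i - σ.2|)).card : ℝ)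
        ≤ 2 * Q1.card := by exact_mod_cast hmed
    linarith
  · -- right facility
    have step2 : (((Finset.univ.filter (fun i : Fin n => σ.2 ≤ π i)).card : ℕ) : ℝ) ≤ ∑ i, frac2 π g1 g2 i := by
      set Q2 := Finset.univ.filter (fun i : Fin n => σ.2 ≤ π i) with hQ2
      have e1 : ∀ i ∈ Q2, frac2 π g1 g2 i = 1 := by
        intro i hi
        exact hf1 i (le_trans hg2σ (Finset.mem_filter.mp hi).2)
      calc (Q2.card : ℝ) = ∑ i ∈ Q2, frac2 π g1 g2 i := by
            rw [Finset.sum_congr rfl e1, Finset.sum_const, nsmul_eq_mul, mul_one]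
        _ ≤ ∑ i, frac2 π g1 g2 i := by
            apply Finset.sum_le_sum_of_subset_of_nonneg (Finset.filter_subset _ _)
            intro i _ _
            exact hfnn i
    have hmed := median_right π σ.1 σ.2 hσ12 hopt
    have hk : (Finset.univ.filter (fun i : Fin n => |π i - σ.1| ≤ |π i - σ.2|)).card +
        (Finset.univ.filter (fun i : Fin n => ¬ |π i - σ.1| ≤ |π i - σ.2|)).card = n := by
      rw [Finset.card_filter_add_card_filter_not, Finset.card_univ, Fintype.card_fin]
    have hcast : ((n - (Finset.univ.filter (fun i : Fin n => |π i - σ.1| ≤ |π i - σ.2|)).card : ℕ) : ℝ)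
        ≤ 2 * ((Finset.univ.filter (fun i : Fin n => σ.2 ≤ π i)).card : ℕ) := by
      have : (n - (Finset.univ.filter (fun i : Fin n => |π i - σ.1| ≤ |π i - σ.2|)).card : ℕ)
          ≤ 2 * (Finset.univ.filter (fun i : Fin n => σ.2 ≤ π i)).card := by omega
      exact_mod_cast this
    linarith
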